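/- Let d be a positive integer, M₁, M₂, ε > 0, and c ∈ ℝ^d nonzero with ‖c‖₂^{−1} = z. Let H_z = {λ ∈ ℝ^d : c·λ ≤ 1}. Then there exists an (ε/M₂)-cover (in the Euclidean norm) of B_{M₁} ∩ H_z of cardinality at most (Vol(B_{M₁ + ε/(2M₂)} ∩ H_{z + ε/(2M₂)}) / Vol(B_{M₁ + ε/(2M₂)})) · (2M₁M₂/ε + 1)^d, where H_{z + ε/(2M₂)} = {λ : c'·λ ≤ 1} is the parallel half-space whose bounding hyperplane is at distance z + ε/(2M₂) from the origin (c' = c·z/(z + ε/(2M₂))), and Vol denotes Lebesgue measure on ℝ^d. -/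

import Mathlib

open scoped RealInnerProductSpace
open MeasureTheory Metric

/-- Covering number of a ball intersected with a half-space: `B_{M₁} ∩ H_z`, where
`H_z = {λ : c·λ ≤ 1}` has bounding hyperplane at distance `z = ‖c‖₂⁻¹` from the origin,
admits an `(ε/M₂)`-cover of cardinality at most the volume ratio
`Vol(B_{M₁+ε/(2M₂)} ∩ H_{z+ε/(2M₂)}) / Vol(B_{M₁+ε/(2M₂)})` times `(2M₁M₂/ε + 1)^d`,
where `H_{z+ε/(2M₂)} = {λ : c'·λ ≤ 1}` with `c' = (z/(z+ε/(2M₂))) • c`. -/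
theorem stmt_9 (d : ℕ) (hd : 0 < d) (M₁ M₂ ε : ℝ) (hM₁ : 0 < M₁) (hM₂ : 0 < M₂)
    (hε : 0 < ε) (c : EuclideanSpace ℝ (Fin d)) (hc : c ≠ 0) (z : ℝ) (hz : ‖c‖⁻¹ = z) :
    ∃ U : Finset (EuclideanSpace ℝ (Fin d)),
      (∀ a : EuclideanSpace ℝ (Fin d), ‖a‖ ≤ M₁ → ⟪c, a⟫ ≤ 1 → ∃ u ∈ U, ‖a - u‖ ≤ ε / M₂) ∧
      (U.card : ℝ) ≤
        ((MeasureTheory.volume {l : EuclideanSpace ℝ (Fin d) |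
            ‖l‖ ≤ M₁ + ε / (2 * M₂) ∧ ⟪(z / (z + ε / (2 * M₂))) • c, l⟫ ≤ 1}).toReal /
          (MeasureTheory.volume {l : EuclideanSpace ℝ (Fin d) |
            ‖l‖ ≤ M₁ + ε / (2 * M₂)}).toReal) * (2 * M₁ * M₂ / ε + 1) ^ d := by
  classical
  have hnc : 0 < ‖c‖ := norm_pos_iff.mpr hc
  have hz0 : 0 < z := hz ▸ inv_pos.mpr hnc
  set r : ℝ := ε / (2 * M₂) with hrdef
  have hr0 : 0 < r := by positivity
  set δ : ℝ := ε / M₂ with hδdef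
  have hδ0 : 0 < δ := by positivity
  have hδr : δ = 2 * r := by rw [hδdef, hrdef]; ring
  set A : Set (EuclideanSpace ℝ (Fin d)) :=
    {l | ‖l‖ ≤ M₁ + r ∧ ⟪(z / (z + r)) • c, l⟫ ≤ 1} with hAdef
  set V : ℝ := (volume (ball (0 : EuclideanSpace ℝ (Fin d)) 1)).toReal with hVdef
  have hV : 0 < V := ENNReal.toReal_pos (measure_ball_pos _ _ one_pos).ne' measure_ball_lt_top.ne
  -- balls of radius r around points of K lie in A
  have hsubA : ∀ u : EuclideanSpace ℝ (Fin d), ‖u‖ ≤ M₁ → ⟪c, u⟫ ≤ 1 →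
      closedBall u r ⊆ A := by
    intro u hu1 hu2 y hy
    rw [mem_closedBall, dist_eq_norm] at hy
    refine ⟨?_, ?_⟩
    · have := norm_sub_norm_le y u
      linarith
    · have h3 : ⟪c, y - u⟫ ≤ ‖c‖ * ‖y - u‖ := real_inner_le_norm c (y - u)
      have h4 : ‖c‖ = z⁻¹ := by rw [← hz, inv_inv]
      have h5 : ⟪c, y - u⟫ = ⟪c, y⟫ - ⟪c, u⟫ := inner_sub_right c y u
      have h6 : ‖c‖ * ‖y - u‖ ≤ z⁻¹ * r := by
        rw [h4]; exact mul_le_mul_of_nonneg_left hy (by positivity)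
      have hcy : ⟪c, y⟫ ≤ 1 + r / z := by
        have : z⁻¹ * r = r / z := by ring
        linarith
      have hfrac : (0:ℝ) ≤ z / (z + r) := by positivity
      have hzr : z + r ≠ 0 := by positivity
      have hzne : z ≠ 0 := ne_of_gt hz0
      calc ⟪(z / (z + r)) • c, y⟫ = (z / (z + r)) * ⟪c, y⟫ := real_inner_smul_left c y _
        _ ≤ (z / (z + r)) * (1 + r / z) := mul_le_mul_of_nonneg_left hcy hfrac
        _ = 1 := by field_simp
  -- the key packing bound
  have key : ∀ U : Finset (EuclideanSpace ℝ (Fin d)),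
      (∀ x ∈ U, ‖x‖ ≤ M₁ ∧ ⟪c, x⟫ ≤ 1) →
      (∀ x ∈ U, ∀ y ∈ U, x ≠ y → δ < dist x y) →
      (U.card : ℝ) * (r ^ d * V) ≤ (volume A).toReal := by
    intro U h1 h2
    have hdisj : (U : Set (EuclideanSpace ℝ (Fin d))).Pairwise
        (Function.onFun Disjoint fun u => closedBall u r) := by
      intro x hx y hy hxy
      exact closedBall_disjoint_closedBall (by have := h2 x hx y hy hxy; linarith [hδr])
    have hsum : ∑ u ∈ U, volume (closedBall u r) ≤ volume A := by
      rw [← measure_biUnion_finset hdisj fun u _ => measurableSet_closedBall]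
      exact measure_mono (Set.iUnion₂_subset fun u hu => hsubA u (h1 u hu).1 (h1 u hu).2)
    have hball : ∀ u : EuclideanSpace ℝ (Fin d), volume (closedBall u r)
        = ENNReal.ofReal (r ^ d) * volume (ball (0 : EuclideanSpace ℝ (Fin d)) 1) := by
      intro u
      rw [Measure.addHaar_closedBall volume u hr0.le, finrank_euclideanSpace_fin]
    rw [Finset.sum_congr rfl fun u _ => hball u, Finset.sum_const, nsmul_eq_mul] at hsum
    have hAfin : volume A ≠ ⊤ := by
      have hsub : A ⊆ closedBall (0 : EuclideanSpace ℝ (Fin d)) (M₁ + r) :=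
        fun l hl => mem_closedBall_zero_iff.mpr hl.1
      exact ne_top_of_le_ne_top measure_closedBall_lt_top.ne (measure_mono hsub)
    have := ENNReal.toReal_mono hAfin hsum
    rwa [ENNReal.toReal_mul, ENNReal.toReal_mul, ENNReal.toReal_natCast,
      ENNReal.toReal_ofReal (by positivity)] at this
  have hrdV : 0 < r ^ d * V := by positivity
  set X : ℝ := (volume A).toReal / (r ^ d * V) with hXdef
  have cardle : ∀ U : Finset (EuclideanSpace ℝ (Fin d)),
      (∀ x ∈ U, ‖x‖ ≤ M₁ ∧ ⟪c, x⟫ ≤ 1) →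
      (∀ x ∈ U, ∀ y ∈ U, x ≠ y → δ < dist x y) →
      (U.card : ℝ) ≤ X := fun U h1 h2 => (le_div_iff₀ hrdV).mpr (key U h1 h2)
  set s : Set ℕ := {n | ∃ U : Finset (EuclideanSpace ℝ (Fin d)),
    (∀ x ∈ U, ‖x‖ ≤ M₁ ∧ ⟪c, x⟫ ≤ 1) ∧
    (∀ x ∈ U, ∀ y ∈ U, x ≠ y → δ < dist x y) ∧ U.card = n} with hsdef
  have h0 : 0 ∈ s := ⟨∅, by simp, by simp, rfl⟩
  have hbdd : BddAbove s := by
    refine ⟨⌈X⌉₊, fun n hn => ?_⟩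
    obtain ⟨U, h1, h2, h3⟩ := hn
    have := (cardle U h1 h2).trans (Nat.le_ceil X)
    exact_mod_cast h3 ▸ Nat.cast_le.mp this
  obtain ⟨U, hU1, hU2, hU3⟩ := Nat.sSup_mem ⟨0, h0⟩ hbdd
  refine ⟨U, ?_, ?_⟩
  · -- covering property, by maximality
    intro a ha1 ha2
    by_contra hcon
    push_neg at hcon
    have haU : a ∉ U := by
      intro h
      have := hcon a h
      rw [sub_self, norm_zero] at this
      linarith
    have hmem : U.card + 1 ∈ s := by
      refine ⟨insert a U, ?_, ?_, by rw [Finset.card_insert_of_notMem haU]⟩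
      · intro x hx
        rcases Finset.mem_insert.mp hx with h | h
        · exact h ▸ ⟨ha1, ha2⟩
        · exact hU1 x h
      · intro x hx y hy hxy
        rcases Finset.mem_insert.mp hx with h | h <;>
          rcases Finset.mem_insert.mp hy with h' | h'
        · exact absurd (h.trans h'.symm) hxy
        · rw [h, dist_eq_norm]; exact hcon y h'
        · rw [h', dist_comm, dist_eq_norm]; exact hcon x h
        · exact hU2 x h y h' hxy
    have := le_csSup hbdd hmem
    omega
  · -- cardinality bound
    have hbig : {l : EuclideanSpace ℝ (Fin d) | ‖l‖ ≤ M₁ + r}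
        = closedBall (0 : EuclideanSpace ℝ (Fin d)) (M₁ + r) := by
      ext l; simp [mem_closedBall_zero_iff]
    have hbigvol : (volume {l : EuclideanSpace ℝ (Fin d) | ‖l‖ ≤ M₁ + r}).toReal
        = (M₁ + r) ^ d * V := by
      rw [hbig, Measure.addHaar_closedBall volume _ (by positivity : (0:ℝ) ≤ M₁ + r),
        finrank_euclideanSpace_fin, ENNReal.toReal_mul, ENNReal.toReal_ofReal (by positivity)]
    have hq : 2 * M₁ * M₂ / ε + 1 = (M₁ + r) / r := by
      rw [hrdef]; field_simp
    have hMr : ((M₁ + r) : ℝ) ^ d ≠ 0 := by positivity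
    have hVne : V ≠ 0 := ne_of_gt hV
    have hrd : (r : ℝ) ^ d ≠ 0 := by positivity
    have hRHS : (volume A).toReal / ((M₁ + r) ^ d * V) * ((M₁ + r) / r) ^ d = X := by
      rw [hXdef, div_pow]
      field_simp
    rw [hbigvol, hq, hRHS]
    exact cardle U hU1 hU2
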